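/- Let (X_i)_{i∈N} be an i.i.d. process with values in a finite set, with H(X_1) > 0. Then the relative index of uniformity D(X_1^n)/H(X_1^n) converges to (ln(#s(X_1)) − H(X_1))/H(X_1) as n → ∞, where s(X_1) is the support of X_1. In particular, it converges to 0 if and only if X_1 is uniform on its support. -/

import Mathlib

open Finset Real Filter

def IsPMF {α : Type*} [Fintype α] (p : α → ℝ) : Prop :=
  (∀ x, 0 ≤ p x) ∧ ∑ x, p x = 1

noncomputable def inf' {α : Type*} (p : α → ℝ) (x : α) : ℝ := -Real.log (p x)

noncomputable def ent {α : Type*} [Fintype α] (p : α → ℝ) : ℝ :=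
  ∑ x, p x * inf' p x

noncomputable def Mfl {α : Type*} [Fintype α] (p : α → ℝ) (a : ℝ) : ℝ :=
  ∑ x, p x * |inf' p x - a|

noncomputable def Mpl {α : Type*} [Fintype α] (p : α → ℝ) (a : ℝ) : ℝ :=
  ∑ x, p x * max (inf' p x - a) 0

noncomputable def Mmi {α : Type*} [Fintype α] (p : α → ℝ) (a : ℝ) : ℝ :=
  ∑ x, p x * max (a - inf' p x) 0

open Classical in
noncomputable def dist' {Ω α : Type*} [Fintype Ω] (μ : Ω → ℝ) (X : Ω → α) : α → ℝ :=
  fun a => ∑ ω, if X ω = a then μ ω else 0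

noncomputable def entRV {Ω α : Type*} [Fintype Ω] [Fintype α] (μ : Ω → ℝ) (X : Ω → α) : ℝ :=
  ent (dist' μ X)

noncomputable def MRV {Ω α : Type*} [Fintype Ω] [Fintype α] (μ : Ω → ℝ) (X : Ω → α) : ℝ :=
  Mfl (dist' μ X) (entRV μ X)

noncomputable def infCond {Ω α β : Type*} [Fintype Ω] (μ : Ω → ℝ) (X : Ω → α) (Y : Ω → β) (ω : Ω) : ℝ :=
  inf' (dist' μ (fun ω => (X ω, Y ω))) (X ω, Y ω) - inf' (dist' μ Y) (Y ω)

noncomputable def entCond {Ω α β : Type*} [Fintype Ω] (μ : Ω → ℝ) (X : Ω → α) (Y : Ω → β) : ℝ :=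
  ∑ ω, μ ω * infCond μ X Y ω

noncomputable def MCond {Ω α β : Type*} [Fintype Ω] (μ : Ω → ℝ) (X : Ω → α) (Y : Ω → β) : ℝ :=
  ∑ ω, μ ω * |infCond μ X Y ω - entCond μ X Y|

open Classical in
noncomputable def propOf {γ : Type*} [Fintype γ] (P : γ → Prop) : ℝ :=
  ((Finset.univ.filter P).card : ℝ) / (Fintype.card γ : ℝ)

open Classical in
noncomputable def suppCard {α : Type*} [Fintype α] (p : α → ℝ) : ℕ :=
  (Finset.univ.filter (fun x => p x ≠ 0)).card

/-- Law of `n` i.i.d. copies of `p`. -/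
noncomputable def iidDist {α : Type*} (p : α → ℝ) (n : ℕ) : (Fin n → α) → ℝ :=
  fun v => ∏ i, p (v i)

section Aux
variable {α β : Type*} [Fintype α] [Fintype β]

lemma ent_comp_equiv (q : β → ℝ) (e : α ≃ β) : ent (fun a => q (e a)) = ent q := by
  unfold ent _root_.inf'
  exact Equiv.sum_comp e (fun b => q b * -Real.log (q b))

lemma ent_prod (p : α → ℝ) (q : β → ℝ) (hp1 : ∑ x, p x = 1) (hq1 : ∑ y, q y = 1) :
    ent (fun z : α × β => p z.1 * q z.2) = ent p + ent q := by
  unfold ent _root_.inf'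
  rw [Fintype.sum_prod_type]
  have key : ∀ x y, p x * q y * -Real.log (p x * q y)
      = q y * (p x * -Real.log (p x)) + p x * (q y * -Real.log (q y)) := by
    intro x y
    rcases eq_or_ne (p x) 0 with h | h
    · simp [h]
    rcases eq_or_ne (q y) 0 with h' | h'
    · simp [h']
    rw [Real.log_mul h h']
    ring
  simp only [key, Finset.sum_add_distrib]
  rw [Finset.sum_comm (f := fun x y => q y * (p x * -Real.log (p x)))]
  simp only [← Finset.mul_sum, ← Finset.sum_mul, hp1, hq1]
  simp [mul_comm]

lemma suppCard_comp_equiv (q : β → ℝ) (e : α ≃ β) : suppCard (fun a => q (e a)) = suppCard q := by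
  classical
  unfold suppCard
  rw [← Fintype.card_subtype, ← Fintype.card_subtype]
  exact Fintype.card_congr (e.subtypeEquiv (fun a => Iff.rfl))

lemma suppCard_prod (p : α → ℝ) (q : β → ℝ) :
    suppCard (fun z : α × β => p z.1 * q z.2) = suppCard p * suppCard q := by
  classical
  unfold suppCard
  rw [← Finset.card_product]
  congr 1
  ext z
  simp [mul_ne_zero_iff]

lemma iid_cons (p : α → ℝ) (n : ℕ) (z : α × (Fin n → α)) :
    iidDist p (n + 1) ((Fin.consEquiv (fun _ => α)) z) = p z.1 * iidDist p n z.2 := by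
  obtain ⟨x, v⟩ := z
  unfold iidDist
  rw [Fin.prod_univ_succ]
  simp [Fin.consEquiv]

lemma iid_sum (p : α → ℝ) (hp1 : ∑ x, p x = 1) (n : ℕ) : ∑ v, iidDist p n v = 1 := by
  induction n with
  | zero => simp [iidDist]
  | succ n ih =>
      rw [← Equiv.sum_comp (Fin.consEquiv (fun _ => α)) (iidDist p (n+1))]
      simp only [iid_cons]
      rw [Fintype.sum_prod_type]
      simp only [← Finset.mul_sum, ih, mul_one, hp1]

lemma iid_nonneg (p : α → ℝ) (hp : ∀ x, 0 ≤ p x) (n : ℕ) (v : Fin n → α) : 0 ≤ iidDist p n v :=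
  Finset.prod_nonneg (fun i _ => hp (v i))

lemma iid_pmf (p : α → ℝ) (hp : IsPMF p) (n : ℕ) : IsPMF (iidDist p n) :=
  ⟨iid_nonneg p hp.1 n, iid_sum p hp.2 n⟩

lemma iid_ent (p : α → ℝ) (hp1 : ∑ x, p x = 1) (n : ℕ) : ent (iidDist p n) = n * ent p := by
  induction n with
  | zero =>
      simp [ent, iidDist, _root_.inf']
  | succ n ih =>
      rw [← ent_comp_equiv (iidDist p (n+1)) (Fin.consEquiv (fun _ => α))]
      have : (fun z : α × (Fin n → α) => iidDist p (n+1) ((Fin.consEquiv (fun _ => α)) z))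
          = fun z : α × (Fin n → α) => p z.1 * iidDist p n z.2 := funext (iid_cons p n)
      rw [this, ent_prod p (iidDist p n) hp1 (iid_sum p hp1 n), ih]
      push_cast; ring

lemma iid_suppCard (p : α → ℝ) (n : ℕ) : suppCard (iidDist p n) = (suppCard p) ^ n := by
  induction n with
  | zero =>
      classical
      simp [suppCard, iidDist]
  | succ n ih =>
      rw [← suppCard_comp_equiv (iidDist p (n+1)) (Fin.consEquiv (fun _ => α))]
      have : (fun z : α × (Fin n → α) => iidDist p (n+1) ((Fin.consEquiv (fun _ => α)) z))
          = fun z : α × (Fin n → α) => p z.1 * iidDist p n z.2 := funext (iid_cons p n)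
      rw [this, suppCard_prod, ih, pow_succ]
      ring

lemma Mfl_decomp (q : α → ℝ) (hq1 : ∑ x, q x = 1) (a : ℝ) :
    Mfl q a = (a - ent q) + 2 * Mpl q a := by
  unfold Mfl Mpl ent
  have key : ∀ x, q x * |_root_.inf' q x - a|
      = (q x * a - q x * _root_.inf' q x) + 2 * (q x * max (_root_.inf' q x - a) 0) := by
    intro x
    have : |_root_.inf' q x - a| = (a - _root_.inf' q x) + 2 * max (_root_.inf' q x - a) 0 := by
      rcases le_total (_root_.inf' q x) a with h | h
      · rw [abs_of_nonpos (by linarith), max_eq_right (by linarith)]; ring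
      · rw [abs_of_nonneg (by linarith), max_eq_left (by linarith)]; ring
    rw [this]; ring
  simp only [key, Finset.sum_add_distrib, Finset.sum_sub_distrib, ← Finset.mul_sum,
    ← Finset.sum_mul]
  rw [hq1]
  ring

lemma Mpl_nonneg (q : α → ℝ) (hq : ∀ x, 0 ≤ q x) (a : ℝ) : 0 ≤ Mpl q a :=
  Finset.sum_nonneg fun x _ => mul_nonneg (hq x) (le_max_right _ _)

lemma log_le_div_e {y : ℝ} (hy : 0 < y) : Real.log y ≤ y / Real.exp 1 := by
  have h := Real.log_le_sub_one_of_pos (x := y / Real.exp 1) (by positivity)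
  rw [Real.log_div (ne_of_gt hy) (by positivity), Real.log_exp] at h
  linarith

lemma Mpl_le (q : α → ℝ) (hq : IsPMF q) : Mpl q (Real.log (suppCard q)) ≤ 1 / Real.exp 1 := by
  classical
  set N := suppCard q with hN
  have hNpos : 0 < N := by
    rcases Finset.exists_ne_zero_of_sum_ne_zero (by rw [hq.2]; norm_num : ∑ x, q x ≠ 0)
      with ⟨x, _, hx⟩
    exact Finset.card_pos.2 ⟨x, Finset.mem_filter.2 ⟨Finset.mem_univ x, hx⟩⟩
  have hterm : ∀ x, q x * max (_root_.inf' q x - Real.log N) 0 ≤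
      if q x = 0 then 0 else 1 / (Real.exp 1 * N) := by
    intro x
    rcases eq_or_ne (q x) 0 with h | h
    · simp [h]
    · simp only [h, if_false]
      have hqx : 0 < q x := lt_of_le_of_ne (hq.1 x) (Ne.symm h)
      rcases le_or_gt (_root_.inf' q x - Real.log N) 0 with hle | hlt
      · rw [max_eq_right hle, mul_zero]; positivity
      · rw [max_eq_left hlt.le]
        have : _root_.inf' q x - Real.log N = Real.log (1 / (q x * N)) := by
          unfold _root_.inf'
          rw [Real.log_div one_ne_zero (by positivity), Real.log_mul h (by positivity),
            Real.log_one]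
          ring
        rw [this]
        have hb := log_le_div_e (y := 1 / (q x * N)) (by positivity)
        calc q x * Real.log (1 / (q x * N)) ≤ q x * ((1 / (q x * N)) / Real.exp 1) := by
              exact mul_le_mul_of_nonneg_left hb hqx.le
          _ = 1 / (Real.exp 1 * N) := by field_simp
  calc Mpl q (Real.log N) ≤ ∑ x, if q x = 0 then 0 else 1 / (Real.exp 1 * N) :=
        Finset.sum_le_sum fun x _ => hterm x
    _ = (N : ℝ) * (1 / (Real.exp 1 * N)) := by
        have h1 : (∑ x, if q x = 0 then (0:ℝ) else 1 / (Real.exp 1 * N))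
            = ∑ x ∈ Finset.univ.filter (fun x => q x ≠ 0), 1 / (Real.exp 1 * N) := by
          rw [Finset.sum_filter]
          exact Finset.sum_congr rfl fun x _ => by by_cases h : q x = 0 <;> simp [h]
        have h2 : (Finset.univ.filter (fun x => q x ≠ 0)).card = N := by
          rw [hN]; unfold suppCard; congr
        rw [h1, Finset.sum_const, h2, nsmul_eq_mul]
    _ = 1 / Real.exp 1 := by
        have : (N:ℝ) ≠ 0 := Nat.cast_ne_zero.2 hNpos.ne'
        field_simp

lemma gibbs (p : α → ℝ) (hp : IsPMF p) :
    ent p ≤ Real.log (suppCard p) ∧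
    (ent p = Real.log (suppCard p) ↔ ∀ x, p x ≠ 0 → p x = 1 / (suppCard p : ℝ)) := by
  classical
  set S := Finset.univ.filter (fun x => p x ≠ 0) with hS
  have hNdef : suppCard p = S.card := by unfold suppCard; congr
  have hsum : ∑ x ∈ S, p x = 1 := by
    rw [← hp.2]
    apply Finset.sum_subset (Finset.subset_univ _)
    intro x _ hx
    by_contra h
    exact hx (Finset.mem_filter.2 ⟨Finset.mem_univ x, h⟩)
  have hNpos : 0 < S.card := by
    rcases Finset.exists_ne_zero_of_sum_ne_zero (by rw [hp.2]; norm_num : ∑ x, p x ≠ 0)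
      with ⟨x, _, hx⟩
    exact Finset.card_pos.2 ⟨x, Finset.mem_filter.2 ⟨Finset.mem_univ x, hx⟩⟩
  set N := S.card with hN
  have hNne : (N : ℝ) ≠ 0 := Nat.cast_ne_zero.2 hNpos.ne'
  have hpos : ∀ x ∈ S, 0 < p x := fun x hx =>
    lt_of_le_of_ne (hp.1 x) (Ne.symm (Finset.mem_filter.1 hx).2)
  have hident : Real.log N - ent p = ∑ x ∈ S, p x * Real.log (p x * N) := by
    have hent : ent p = ∑ x ∈ S, p x * (-Real.log (p x)) := by
      unfold ent _root_.inf'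
      symm
      apply Finset.sum_subset (Finset.subset_univ _)
      intro x _ hx
      have : p x = 0 := by by_contra h; exact hx (Finset.mem_filter.2 ⟨Finset.mem_univ x, h⟩)
      simp [this]
    have hlog : Real.log N = ∑ x ∈ S, p x * Real.log N := by
      rw [← Finset.sum_mul, hsum, one_mul]
    rw [hent, hlog, ← Finset.sum_sub_distrib]
    apply Finset.sum_congr rfl
    intro x hx
    rw [Real.log_mul (hpos x hx).ne' hNne]
    ring
  have hterm : ∀ x ∈ S, p x - 1 / N ≤ p x * Real.log (p x * N) := by
    intro x hx
    have hx0 := hpos x hx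
    have h := Real.log_le_sub_one_of_pos (x := 1 / (p x * N)) (by positivity)
    rw [one_div, Real.log_inv] at h
    have h2 : -(p x * Real.log (p x * N)) ≤ p x * (p x * (N:ℝ))⁻¹ - p x := by
      have := mul_le_mul_of_nonneg_left h hx0.le
      rw [mul_sub, mul_one, mul_neg] at this
      linarith [this]
    have h3 : p x * (p x * (N:ℝ))⁻¹ = 1 / N := by field_simp
    linarith
  have hterm_strict : ∀ x ∈ S, p x * N ≠ 1 → p x - 1 / N < p x * Real.log (p x * N) := by
    intro x hx hne
    have hx0 := hpos x hx
    have h := Real.log_lt_sub_one_of_pos (x := 1 / (p x * N)) (by positivity)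
      (by rw [one_div]; exact fun h => hne (by field_simp at h; linarith [h]))
    rw [one_div, Real.log_inv] at h
    have h2 : -(p x * Real.log (p x * N)) < p x * (p x * (N:ℝ))⁻¹ - p x := by
      have := mul_lt_mul_of_pos_left h hx0
      rw [mul_sub, mul_one, mul_neg] at this
      linarith [this]
    have h3 : p x * (p x * (N:ℝ))⁻¹ = 1 / N := by field_simp
    linarith
  have hsum0 : ∑ x ∈ S, (p x - 1 / (N:ℝ)) = 0 := by
    rw [Finset.sum_sub_distrib, hsum, Finset.sum_const, nsmul_eq_mul]
    field_simp
    simp [hN]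
  have hge : 0 ≤ ∑ x ∈ S, p x * Real.log (p x * N) := by
    rw [← hsum0]
    exact Finset.sum_le_sum hterm
  constructor
  · rw [hNdef]; linarith
  constructor
  · intro heq x hx
    by_contra hne
    have hxS : x ∈ S := Finset.mem_filter.2 ⟨Finset.mem_univ x, hx⟩
    have hne' : p x * N ≠ 1 := by
      intro h
      apply hne
      rw [hNdef]
      field_simp at h ⊢
      linarith
    have hstrict : ∑ x ∈ S, (p x - 1/(N:ℝ)) < ∑ x ∈ S, p x * Real.log (p x * N) :=
      Finset.sum_lt_sum hterm ⟨x, hxS, hterm_strict x hxS hne'⟩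
    rw [hsum0] at hstrict
    rw [hNdef] at heq
    linarith
  · intro hunif
    have : ∑ x ∈ S, p x * Real.log (p x * N) = 0 := by
      apply Finset.sum_eq_zero
      intro x hx
      have : p x * (N:ℝ) = 1 := by
        rw [hunif x (Finset.mem_filter.1 hx).2, hNdef]
        field_simp
      rw [this, Real.log_one, mul_zero]
    rw [hNdef]
    linarith

end Aux


set_option maxHeartbeats 800000 in
theorem stmt11 {α : Type*} [Fintype α] (p : α → ℝ) (hp : IsPMF p) (hH : 0 < ent p) :
    Filter.Tendsto
      (fun n => Mfl (iidDist p n) (Real.log (suppCard (iidDist p n))) / ent (iidDist p n))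
      Filter.atTop (nhds ((Real.log (suppCard p) - ent p) / ent p)) ∧
    (Filter.Tendsto
        (fun n => Mfl (iidDist p n) (Real.log (suppCard (iidDist p n))) / ent (iidDist p n))
        Filter.atTop (nhds 0) ↔ ∀ x, p x ≠ 0 → p x = 1 / (suppCard p : ℝ)) := by
  classical
  set L := Real.log (suppCard p) with hL
  set H := ent p with hHdef
  have hHne : H ≠ 0 := hH.ne'
  set c : ℕ → ℝ := fun n => Mpl (iidDist p n) (Real.log (suppCard (iidDist p n))) with hc
  have hlogn : ∀ n : ℕ, Real.log (suppCard (iidDist p n)) = n * L := by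
    intro n
    rw [iid_suppCard, hL, Nat.cast_pow, Real.log_pow]
  have hentn : ∀ n : ℕ, ent (iidDist p n) = n * H := fun n => iid_ent p hp.2 n
  have hMfl : ∀ n : ℕ, Mfl (iidDist p n) (Real.log (suppCard (iidDist p n)))
      = ((n : ℝ) * L - (n : ℝ) * H) + 2 * c n := by
    intro n
    rw [Mfl_decomp (iidDist p n) (iid_sum p hp.2 n), hlogn, hentn]
    simp only [hc, hlogn]
  have hc0 : ∀ n, 0 ≤ c n := fun n => Mpl_nonneg _ (iid_nonneg p hp.1 n) _
  have hc1 : ∀ n, c n ≤ 1 / Real.exp 1 := fun n => Mpl_le _ (iid_pmf p hp n)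
  set f : ℕ → ℝ := fun n =>
    Mfl (iidDist p n) (Real.log (suppCard (iidDist p n))) / ent (iidDist p n) with hf
  set g : ℕ → ℝ := fun n => 2 * c n / ((n : ℝ) * H) with hg
  have hgto : Filter.Tendsto g Filter.atTop (nhds 0) := by
    apply squeeze_zero' (g := fun n : ℕ => ((2 / Real.exp 1) / H) / (n : ℝ))
    · filter_upwards with n
      rcases Nat.eq_zero_or_pos n with h | h
      · simp [hg, h]
      · have : (0:ℝ) < (n:ℝ) * H := mul_pos (by exact_mod_cast h) hH
        exact div_nonneg (by linarith [hc0 n]) this.le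
    · filter_upwards [Filter.eventually_ge_atTop 1] with n hn
      have hnp : (0:ℝ) < (n:ℝ) := by exact_mod_cast hn
      have hd : (0:ℝ) < (n:ℝ) * H := mul_pos hnp hH
      calc g n ≤ (2 / Real.exp 1) / ((n:ℝ) * H) := by
            simp only [hg]
            gcongr
            calc 2 * c n ≤ 2 * (1 / Real.exp 1) := by linarith [hc1 n]
              _ = 2 / Real.exp 1 := by ring
          _ = ((2 / Real.exp 1) / H) / (n:ℝ) := by
            rw [div_div, div_div, div_div]
            congr 1
            ring
    · exact tendsto_const_div_atTop_nhds_zero_nat _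
  have hlim : Filter.Tendsto f Filter.atTop (nhds ((L - H) / H)) := by
    have heq : ∀ᶠ n in Filter.atTop, (L - H) / H + g n = f n := by
      filter_upwards [Filter.eventually_ge_atTop 1] with n hn
      have hnp : (0:ℝ) < (n:ℝ) := by exact_mod_cast hn
      simp only [hf, hg, hMfl, hentn]
      field_simp
    have := Filter.Tendsto.const_add ((L - H) / H) hgto
    rw [add_zero] at this
    exact Filter.Tendsto.congr' heq this
  refine ⟨hlim, ?_, ?_⟩
  · intro h0
    have huniq : (L - H) / H = 0 := tendsto_nhds_unique hlim h0
    have : L - H = 0 := by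
      rcases div_eq_zero_iff.1 huniq with h | h
      · exact h
      · exact absurd h hHne
    exact (gibbs p hp).2.1 (by rw [← hHdef, ← hL]; linarith)
  · intro hu
    have : H = L := by rw [hHdef, hL]; exact (gibbs p hp).2.2 hu
    have h0 : (L - H) / H = 0 := by rw [this]; simp
    rwa [h0] at hlim
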